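/- Suppose τ : ℤ^D → 𝕋 is an injective group homomorphism with dense image. Let 𝒫 be a simple 𝒜-labelled open partition of 𝕋. Then 𝒫_σ is uniformly injective on 𝕋̃(𝒫): for every ε > 0 there exists M ∈ ℕ such that for all t, u ∈ 𝕋̃(𝒫), if 𝒫_σ(t)_ℓ = 𝒫_σ(u)_ℓ for every ℓ ∈ 𝔹(M), then d(t,u) < ε. In particular 𝒫_σ : 𝕋̃(𝒫) → 𝒜^{ℤ^D} is injective, and its inverse (from the image with the Cantor metric d_C) is uniformly continuous. -/

import Mathlib

open MeasureTheory Filter Topology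
open scoped ENNReal

noncomputable section

/-- The `K`-dimensional torus `𝕋 = (ℝ/ℤ)^K`, with its (sup) quotient metric `d`
and Haar (Lebesgue) probability measure `volume`. -/
abbrev Torus (K : ℕ) := Fin K → AddCircle (1 : ℝ)

/-- The lattice `𝕃 = ℤ^D`. -/
abbrev Zd (D : ℕ) := Fin D → ℤ

/-- The box `𝔹(N) = {-N,…,N-1}^D ⊆ ℤ^D`. -/
def box (D N : ℕ) : Finset (Zd D) :=
  Fintype.piFinset fun _ => Finset.Ico (-(N : ℤ)) (N : ℤ)

open Classical in
/-- `#(J ∩ 𝔹(N)) / (2N)^D`. -/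
def densSeq (D : ℕ) (J : Set (Zd D)) (N : ℕ) : ℝ :=
  ((box D N).filter (fun ℓ => ℓ ∈ J)).card / ((2 * N : ℕ) : ℝ) ^ D

/-- The upper Cesàro density `d̄(J)` of `J ⊆ ℤ^D`. -/
def upperDens (D : ℕ) (J : Set (Zd D)) : ℝ :=
  Filter.limsup (densSeq D J) Filter.atTop

/-- The Besicovitch pseudometric `d_B` on `𝒜^{ℤ^D}`. -/
def dB {A : Type*} (D : ℕ) (p q : Zd D → A) : ℝ :=
  upperDens D {ℓ | p ℓ ≠ q ℓ}

variable {K D : ℕ} {A : Type*}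

/-- An `𝒜`-labelled measurable partition of the torus: pairwise disjoint measurable
cells whose union has full measure. -/
structure IsMeasPartition (P : A → Set (Torus K)) : Prop where
  meas : ∀ a, MeasurableSet (P a)
  disj : Pairwise (Function.onFun Disjoint P)
  full : volume (⋃ a, P a) = 1

/-- An `𝒜`-labelled open partition of the torus: pairwise disjoint open cells whose
union is dense and has full measure. -/
structure IsOpenPartition (P : A → Set (Torus K)) : Prop where
  isOpen : ∀ a, IsOpen (P a)
  disj : Pairwise (Function.onFun Disjoint P)
  dense : Dense (⋃ a, P a)
  full : volume (⋃ a, P a) = 1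

/-- `lab` realizes the partition `P` as an `𝒜`-valued function (each cell is labelled
by its index). -/
def IsLabel (P : A → Set (Torus K)) (lab : Torus K → A) : Prop :=
  ∀ a, ∀ t ∈ P a, lab t = a

/-- The symmetric-difference pseudometric `d_△(𝒫,𝒬) = Σ_a λ(P_a △ Q_a)`. -/
def dSym [Fintype A] (P Q : A → Set (Torus K)) : ℝ :=
  ∑ a, (volume (symmDiff (P a) (Q a))).toReal

/-- `𝕋̃(𝒫) = ⋂_ℓ σ^ℓ(P_*)`, where `σ^ℓ(t) = t + τ(ℓ)` and `P_* = ⋃_a P_a`. -/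
def Ttil (τ : Zd D →+ Torus K) (P : A → Set (Torus K)) : Set (Torus K) :=
  ⋂ ℓ : Zd D, (fun x => x + τ ℓ) '' (⋃ a, P a)

/-- The trajectory map `𝒫_σ(t)_ℓ = 𝒫(σ^ℓ t)`, expressed via a labelling `lab` of `𝒫`. -/
def traj (τ : Zd D →+ Torus K) (lab : Torus K → A) (t : Torus K) : Zd D → A :=
  fun ℓ => lab (t + τ ℓ)

/-- A partition is simple if `0` is its only translational symmetry. -/
def IsSimple (P : A → Set (Torus K)) : Prop :=
  ∀ s : Torus K, (∀ a, volume (symmDiff (P a) ((fun x => x + s) '' P a)) = 0) → s = 0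

/-- The cellular automaton `Φ` with neighbourhood `B` and local rule `φ`:
`Φ(x)_ℓ = φ((x_{ℓ+b})_{b∈B})`. -/
def caMap {D : ℕ} {A : Type*} (B : Finset (Zd D)) (φ : (B → A) → A)
    (x : Zd D → A) : Zd D → A :=
  fun ℓ => φ fun b => x (ℓ + (b : Zd D))

/-- The induced map `Φ̂` on partitions: `Q_a = ⋃_{c : φ(c)=a} ⋂_{b∈B} σ^{-b}(P_{c_b})`. -/
def inducedPart (τ : Zd D →+ Torus K) (B : Finset (Zd D)) (φ : (B → A) → A)
    (P : A → Set (Torus K)) : A → Set (Torus K) :=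
  fun a => ⋃ (c : B → A) (_ : φ c = a), ⋂ b : B, {t | t + τ (b : Zd D) ∈ P (c b)}

/-- `x ∈ QS_σ`: `x` is a `σ`-quasisturmian sequence, i.e. the `𝒫`-trajectory of some
point of `𝕋̃(𝒫)` for some open partition `𝒫`. -/
def IsQSSeq (τ : Zd D →+ Torus K) (x : Zd D → A) : Prop :=
  ∃ (P : A → Set (Torus K)) (lab : Torus K → A) (t : Torus K),
    IsOpenPartition P ∧ IsLabel P lab ∧ t ∈ Ttil τ P ∧ x = traj τ lab t

lemma box_mono' {D : ℕ} {M N : ℕ} (h : M ≤ N) : box D M ⊆ box D N := by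
  intro ℓ hℓ
  simp only [box, Fintype.mem_piFinset, Finset.mem_Ico] at hℓ ⊢
  intro i; have := hℓ i; omega

lemma finset_subset_box' {D : ℕ} (F : Finset (Zd D)) : ∃ M₀ : ℕ, F ⊆ box D M₀ := by
  set S : ℕ := F.sup fun ℓ => Finset.univ.sup fun i => (ℓ i).natAbs with hS
  refine ⟨S + 1, ?_⟩
  intro ℓ hℓ
  simp only [box, Fintype.mem_piFinset, Finset.mem_Ico]
  intro i
  have h2 : (Finset.univ.sup fun i => (ℓ i).natAbs) ≤ S :=
    Finset.le_sup (f := fun ℓ => Finset.univ.sup fun i => (ℓ i).natAbs) hℓ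
  have h1 : (ℓ i).natAbs ≤ Finset.univ.sup fun i => (ℓ i).natAbs :=
    Finset.le_sup (f := fun i => (ℓ i).natAbs) (Finset.mem_univ i)
  have h3 : (ℓ i).natAbs ≤ S := le_trans h1 h2
  clear h1 h2 hS
  have h4 : |ℓ i| ≤ (S : ℤ) := by rw [Int.abs_eq_natAbs]; exact_mod_cast h3
  obtain ⟨h5, h6⟩ := abs_le.1 h4
  refine ⟨by push_cast; linarith, by push_cast; linarith⟩

lemma torus_volume_univ (K : ℕ) : (volume : Measure (Torus K)) Set.univ = 1 := by
  rw [show (Set.univ : Set (Torus K)) = Set.pi Set.univ (fun _ => Set.univ) by simp]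
  rw [volume_pi_pi]
  simp [AddCircle.measure_univ]

/-- For a simple open partition `𝒫`, the trajectory map is uniformly
injective on `𝕋̃(𝒫)`: for every `ε > 0` there is `M` such that agreement of trajectories
on the box `𝔹(M)` forces `d(t,u) < ε`; in particular `𝒫_σ` is injective on `𝕋̃(𝒫)`. -/
theorem simple_open_partition_uniformly_injective {K D : ℕ} (hK : 1 ≤ K) (hD : 1 ≤ D)
    {A : Type*} [Fintype A]
    (τ : Zd D →+ Torus K) (hinj : Function.Injective τ) (hdense : DenseRange τ)
    (P : A → Set (Torus K)) (hP : IsOpenPartition P) (hsimple : IsSimple P)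
    (lab : Torus K → A) (hlab : IsLabel P lab) :
    (∀ ε : ℝ, 0 < ε → ∃ M : ℕ, ∀ t ∈ Ttil τ P, ∀ u ∈ Ttil τ P,
      (∀ ℓ ∈ box D M, lab (t + τ ℓ) = lab (u + τ ℓ)) → dist t u < ε) ∧
    Set.InjOn (traj τ lab) (Ttil τ P) := by
  -- Main uniform statement (for all points of the torus, not just Ttil).
  have main : ∀ ε : ℝ, 0 < ε → ∃ M : ℕ, ∀ t u : Torus K,
      (∀ ℓ ∈ box D M, lab (t + τ ℓ) = lab (u + τ ℓ)) → dist t u < ε := by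
    intro ε hε
    by_contra hcon
    push_neg at hcon
    choose t u hagree hdist using hcon
    obtain ⟨s, -, φ, hφ, hs⟩ := isCompact_univ.tendsto_subseq
      (x := fun M => u M - t M) (fun M => Set.mem_univ _)
    -- Claim: crossing cells is impossible: v ∈ P a, v + s ∈ P b → a = b.
    have claim : ∀ a b : A, ∀ v : Torus K, v ∈ P a → v + s ∈ P b → a = b := by
      intro a b v hv hvs
      obtain ⟨δ1, hδ1, hball1⟩ := Metric.isOpen_iff.1 (hP.isOpen a) v hv
      obtain ⟨δ2, hδ2, hball2⟩ := Metric.isOpen_iff.1 (hP.isOpen b) _ hvs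
      set δ : ℝ := min δ1 δ2 with hδdef
      have hδ : 0 < δ := lt_min hδ1 hδ2
      -- a finite (δ/2)-dense set of lattice translates
      have hcover : (Set.univ : Set (Torus K)) ⊆ ⋃ ℓ : Zd D, Metric.ball (τ ℓ) (δ / 2) := by
        intro x _
        obtain ⟨ℓ, hℓ⟩ := hdense.exists_dist_lt x (by linarith : (0:ℝ) < δ / 2)
        exact Set.mem_iUnion.2 ⟨ℓ, by simpa [Metric.mem_ball, dist_comm] using hℓ⟩
      obtain ⟨F, hF⟩ := isCompact_univ.elim_finite_subcover
        (fun ℓ : Zd D => Metric.ball (τ ℓ) (δ / 2)) (fun ℓ => Metric.isOpen_ball) hcover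
      obtain ⟨M₀, hM₀⟩ := finset_subset_box' F
      -- choose a far-out index with s_{φ n} close to s
      have hev : ∀ᶠ n in atTop, dist (u (φ n) - t (φ n)) s < δ / 2 := by
        have := Metric.tendsto_atTop.1 hs (δ / 2) (by linarith)
        obtain ⟨N₁, hN₁⟩ := this
        exact eventually_atTop.2 ⟨N₁, fun n hn => hN₁ n hn⟩
      obtain ⟨N₁, hN₁⟩ := eventually_atTop.1 hev
      set n : ℕ := max M₀ N₁ with hn
      have hsn : dist (u (φ n) - t (φ n)) s < δ / 2 := hN₁ n (le_max_right _ _)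
      have hMφ : M₀ ≤ φ n := le_trans (le_max_left _ _) (hφ.le_apply)
      -- find ℓ ∈ F with τ ℓ close to v - t (φ n)
      obtain ⟨ℓ, hℓF, hℓ⟩ := Set.mem_iUnion₂.1 (hF (Set.mem_univ (v - t (φ n))))
      have hℓbox : ℓ ∈ box D (φ n) := box_mono' hMφ (hM₀ hℓF)
      have hd1 : dist (t (φ n) + τ ℓ) v < δ / 2 := by
        have : dist (t (φ n) + τ ℓ) (t (φ n) + (v - t (φ n))) < δ / 2 := by
          rw [dist_add_left]
          simpa [Metric.mem_ball, dist_comm] using hℓ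
        simpa using this
      have hmem1 : t (φ n) + τ ℓ ∈ P a :=
        hball1 (by simp only [Metric.mem_ball]; exact lt_of_lt_of_le (by linarith) (min_le_left _ _))
      have hd2 : dist (u (φ n) + τ ℓ) (v + s) < δ := by
        have heq : u (φ n) + τ ℓ = (t (φ n) + τ ℓ) + (u (φ n) - t (φ n)) := by abel
        calc dist (u (φ n) + τ ℓ) (v + s)
            ≤ dist (u (φ n) + τ ℓ) (v + (u (φ n) - t (φ n)))
              + dist (v + (u (φ n) - t (φ n))) (v + s) := dist_triangle _ _ _
          _ = dist (t (φ n) + τ ℓ) v + dist (u (φ n) - t (φ n)) s := by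
              rw [heq, dist_add_right, dist_add_left]
          _ < δ / 2 + δ / 2 := add_lt_add hd1 hsn
          _ = δ := by ring
      have hmem2 : u (φ n) + τ ℓ ∈ P b :=
        hball2 (by simp only [Metric.mem_ball]; exact lt_of_lt_of_le hd2 (min_le_right _ _))
      calc a = lab (t (φ n) + τ ℓ) := (hlab a _ hmem1).symm
        _ = lab (u (φ n) + τ ℓ) := hagree (φ n) ℓ hℓbox
        _ = b := hlab b _ hmem2
    -- s is a symmetry
    have hnull : volume ((⋃ a, P a)ᶜ) = 0 := by
      have hm : MeasurableSet (⋃ a, P a) := (isOpen_iUnion hP.isOpen).measurableSet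
      have : volume ((⋃ a, P a)ᶜ) = volume (Set.univ : Set (Torus K)) - volume (⋃ a, P a) :=
        measure_compl hm (by rw [hP.full]; exact ENNReal.one_ne_top)
      rw [this, torus_volume_univ, hP.full, tsub_self]
    have hsym : ∀ a, volume (symmDiff (P a) ((fun x => x + s) '' P a)) = 0 := by
      intro a
      have h1 : (fun x => x + s) '' P a \ P a ⊆ (⋃ a', P a')ᶜ := by
        rintro y ⟨⟨x, hx, rfl⟩, hy⟩ hmem
        obtain ⟨_, ⟨c, rfl⟩, hc⟩ := hmem
        exact hy (by rwa [← claim a c x hx hc] at hc)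
      have h2 : P a \ (fun x => x + s) '' P a ⊆ (fun x => x + s) '' (⋃ a', P a')ᶜ := by
        rintro y ⟨hy, hns⟩
        refine ⟨y - s, ?_, sub_add_cancel y s⟩
        intro hmem
        obtain ⟨_, ⟨c, rfl⟩, hc⟩ := hmem
        have hca : c = a := claim c a (y - s) hc (by simpa using hy)
        exact hns ⟨y - s, by rwa [hca] at hc, sub_add_cancel y s⟩
      have himg : volume ((fun x => x + s) '' (⋃ a', P a')ᶜ) = 0 := by
        rw [Set.image_add_right, measure_preimage_add_right]
        exact hnull
      have hle : volume (symmDiff (P a) ((fun x => x + s) '' P a)) ≤ 0 := by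
        rw [Set.symmDiff_def]
        calc volume (P a \ (fun x => x + s) '' P a ∪ (fun x => x + s) '' P a \ P a)
            ≤ volume (P a \ (fun x => x + s) '' P a)
              + volume ((fun x => x + s) '' P a \ P a) := measure_union_le _ _
          _ ≤ volume ((fun x => x + s) '' (⋃ a', P a')ᶜ) + volume ((⋃ a', P a')ᶜ) :=
              add_le_add (measure_mono h2) (measure_mono h1)
          _ = 0 := by rw [himg, hnull, add_zero]
      exact le_antisymm hle zero_le
    have hs0 : s = 0 := hsimple s hsym
    -- contradiction
    obtain ⟨N₂, hN₂⟩ := Metric.tendsto_atTop.1 hs ε hε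
    have hn := hN₂ N₂ le_rfl
    rw [hs0] at hn
    have hlt : dist (t (φ N₂)) (u (φ N₂)) < ε := by
      calc dist (t (φ N₂)) (u (φ N₂)) = dist (u (φ N₂) - t (φ N₂)) 0 := by
            rw [dist_eq_norm, dist_eq_norm, sub_zero, norm_sub_rev]
        _ < ε := hn
    exact absurd hlt (not_lt.2 (hdist (φ N₂)))
  refine ⟨fun ε hε => ?_, fun t ht u hu h => ?_⟩
  · obtain ⟨M, hM⟩ := main ε hε
    exact ⟨M, fun t _ u _ hag => hM t u hag⟩
  · by_contra hne
    have hd : 0 < dist t u := dist_pos.2 hne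
    obtain ⟨M, hM⟩ := main (dist t u) hd
    exact lt_irrefl _ (hM t u (fun ℓ _ => congrFun h ℓ))


end
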